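/- Let z = (z₁,z₂,z₃,z₄) ∈ ℂ⁴ with |z₁|² + |z₂|² + |z₃|² + |z₄|² = 1, and let X₁(z), X₂(z), X₃(z) be the tangent vectors to the irreducible SU(2)-orbit through z. Then Ω₀(z, X₁(z), X₂(z), X₃(z)) = 0 if and only if ζ₃(z) = 0. (This is the condition that the cone over the orbit is the zero locus of the holomorphic volume form, i.e. a complex cone condition.) -/

import Mathlib

noncomputable section

open Matrix Complex

/-- `ℂ⁴` as functions `Fin 4 → ℂ`. -/
abbrev C4 := Fin 4 → ℂ

/-- `√3` as a complex number. -/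
def sqrt3 : ℂ := (Real.sqrt 3 : ℂ)

/-- First tangent vector to the orbit of the irreducible SU(2) action on `ℂ⁴` at `z`:
`X₁(z) = (√3 z₂, −√3 z₁ + 2z₃, −2z₂ + √3 z₄, −√3 z₃)`. -/
def X1 (z : C4) : C4 :=
  ![sqrt3 * z 1, -sqrt3 * z 0 + 2 * z 2, -2 * z 1 + sqrt3 * z 3, -sqrt3 * z 2]

/-- Second tangent vector:
`X₂(z) = (i√3 z₂, i√3 z₁ + 2i z₃, 2i z₂ + i√3 z₄, i√3 z₃)`. -/
def X2 (z : C4) : C4 :=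
  ![Complex.I * sqrt3 * z 1, Complex.I * sqrt3 * z 0 + 2 * Complex.I * z 2,
    2 * Complex.I * z 1 + Complex.I * sqrt3 * z 3, Complex.I * sqrt3 * z 2]

/-- Third tangent vector: `X₃(z) = (3i z₁, i z₂, −i z₃, −3i z₄)`. -/
def X3 (z : C4) : C4 :=
  ![3 * Complex.I * z 0, Complex.I * z 1, -Complex.I * z 2, -3 * Complex.I * z 3]

/-- The real inner product on `ℂ⁴`: `⟨u,v⟩ = Σⱼ Re (conj uⱼ * vⱼ)`. -/
def rinner (u v : C4) : ℝ := ∑ j, ((starRingEnd ℂ) (u j) * v j).re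

/-- The Kähler form on `ℂ⁴`: `ω₀(u,v) = Σⱼ Im (conj uⱼ * vⱼ)`. -/
def omega0 (u v : C4) : ℝ := ∑ j, ((starRingEnd ℂ) (u j) * v j).im

/-- The holomorphic volume form on `ℂ⁴`: determinant of the complex 4×4 matrix with
columns `v₁, v₂, v₃, v₄`. -/
def Omega0 (v₁ v₂ v₃ v₄ : C4) : ℂ :=
  Matrix.det (Matrix.of fun r c => ![v₁, v₂, v₃, v₄] c r)

/-- The Spin(7) 4-form on `ℂ⁴ ≅ ℝ⁸`:
`Φ₀ = ω₀(v₁,v₂)ω₀(v₃,v₄) − ω₀(v₁,v₃)ω₀(v₂,v₄) + ω₀(v₁,v₄)ω₀(v₂,v₃) + Re Ω₀`. -/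
def Phi0 (v₁ v₂ v₃ v₄ : C4) : ℝ :=
  omega0 v₁ v₂ * omega0 v₃ v₄ - omega0 v₁ v₃ * omega0 v₂ v₄ +
  omega0 v₁ v₄ * omega0 v₂ v₃ + (Omega0 v₁ v₂ v₃ v₄).re

/-- `ζ₁(z) = 3|z₄|² + |z₃|² − |z₂|² − 3|z₁|²`. -/
def zeta1 (z : C4) : ℝ :=
  3 * Complex.normSq (z 3) + Complex.normSq (z 2) -
  Complex.normSq (z 1) - 3 * Complex.normSq (z 0)

/-- `ζ₂(z) = 2√3 z₁ conj(z₂) + 4 z₂ conj(z₃) + 2√3 z₃ conj(z₄)`. -/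
def zeta2 (z : C4) : ℂ :=
  2 * sqrt3 * z 0 * (starRingEnd ℂ) (z 1) + 4 * z 1 * (starRingEnd ℂ) (z 2) +
  2 * sqrt3 * z 2 * (starRingEnd ℂ) (z 3)

/-- `ζ₃(z) = 36 z₁²z₄² − 12 z₂²z₃² + 16√3 z₁z₃³ + 16√3 z₂³z₄ − 72 z₁z₂z₃z₄`. -/
def zeta3 (z : C4) : ℂ :=
  36 * z 0 ^ 2 * z 3 ^ 2 - 12 * z 1 ^ 2 * z 2 ^ 2 + 16 * sqrt3 * z 0 * z 2 ^ 3 +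
  16 * sqrt3 * z 1 ^ 3 * z 3 - 72 * z 0 * z 1 * z 2 * z 3

/-- For a unit vector `z`, the holomorphic volume form vanishes on
`(z, X₁(z), X₂(z), X₃(z))` if and only if `ζ₃(z) = 0` (the condition that the cone
over the orbit is a complex cone condition). -/
theorem Omega0_orbit_eq_zero_iff_zeta3 (z : C4)
    (hz : ∑ j, Complex.normSq (z j) = 1) :
    Omega0 z (X1 z) (X2 z) (X3 z) = 0 ↔ zeta3 z = 0 := by
  have h3 : sqrt3 ^ 2 = 3 := by
    have : Real.sqrt 3 ^ 2 = 3 := Real.sq_sqrt (by norm_num)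
    simp only [sqrt3]
    rw [← Complex.ofReal_pow, this]; norm_num
  have key : Omega0 z (X1 z) (X2 z) (X3 z) = -zeta3 z := by
    simp [Omega0, X1, X2, X3, zeta3, Matrix.det_succ_row_zero, Fin.sum_univ_succ,
      Fin.succAbove, Fin.lt_def, Matrix.submatrix_apply, -Fin.val_pos_iff,
      show Fin.castSucc (2 : Fin 3) = (2 : Fin 4) from rfl, show Fin.succ (2 : Fin 3) = (3 : Fin 4) from rfl]
    linear_combination (4 * z 1 ^ 2 * z 2 ^ 2 + 8 * z 0 * z 1 * z 2 * z 3 -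
      12 * z 0 ^ 2 * z 3 ^ 2) * h3 +
      (16 * sqrt3 * z 0 * z 2 ^ 3 - 8 * sqrt3 ^ 2 * z 0 * z 1 * z 2 * z 3 -
        48 * z 0 * z 1 * z 2 * z 3 + 12 * sqrt3 ^ 2 * z 0 ^ 2 * z 3 ^ 2 +
        16 * sqrt3 * z 1 ^ 3 * z 3 - 4 * sqrt3 ^ 2 * z 1 ^ 2 * z 2 ^ 2) * Complex.I_sq
  rw [key, neg_eq_zero]

end
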